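/- Let G be an n-vertex d-regular graph which is a γ-expander, i.e. for every S ⊆ V(G) with 1 ≤ |S| ≤ (2/3)n one has e_G(S, V(G)∖S) ≥ γ·d·|S|. Then G stays connected after simultaneously removing any edge set E′ ⊆ E(G) with maximum degree at most γd/4 and any vertex set U ⊆ V(G) with |U| ≤ γd/4. -/

import Mathlib

noncomputable section

/-- The number of edges of `G` crossing the cut `(S, Sᶜ)`, counted as the number of
ordered adjacent pairs `(u, v)` with `u ∈ S`, `v ∉ S` (each cut edge is counted once). -/
def cutCount {V : Type*} (G : SimpleGraph V) (S : Set V) : ℕ :=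
  {p : V × V | G.Adj p.1 p.2 ∧ p.1 ∈ S ∧ p.2 ∉ S}.ncard

private lemma key_lemma {V : Type*} [Fintype V] (G : SimpleGraph V) (d : ℕ) (γ : ℝ)
    (hd : 1 ≤ d) (hγ : 0 < γ) (hγ1 : γ ≤ 1)
    (hreg : ∀ v : V, (G.neighborSet v).ncard = d)
    (hexp : ∀ S : Set V, 1 ≤ S.ncard → (S.ncard : ℝ) ≤ 2 / 3 * (Fintype.card V : ℝ) →
      γ * d * S.ncard ≤ (cutCount G S : ℝ))
    (E' : Set (Sym2 V))
    (hE'deg : ∀ v : V, ({e ∈ E' | v ∈ e}.ncard : ℝ) ≤ γ * d / 4)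
    (U : Set V) (hU : (U.ncard : ℝ) ≤ γ * d / 4)
    (x : ↥Uᶜ)
    (hsize : (((Subtype.val '' {z : ↥Uᶜ | ((G.deleteEdges E').induce Uᶜ).Reachable x z}) : Set V).ncard : ℝ)
      ≤ 2 / 3 * (Fintype.card V : ℝ)) : False := by
  classical
  set H := (G.deleteEdges E').induce Uᶜ with hH
  set S : Set V := Subtype.val '' {z : ↥Uᶜ | H.Reachable x z} with hSdef
  have hxS : (x : V) ∈ S := ⟨x, SimpleGraph.Reachable.refl x, rfl⟩
  have hSU : ∀ v ∈ S, v ∉ U := by rintro v ⟨z, _, rfl⟩; exact z.2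
  have hclose : ∀ u ∈ S, ∀ v : V, G.Adj u v → v ∉ U → s(u, v) ∉ E' → v ∈ S := by
    rintro u ⟨zu, hzu, rfl⟩ v hadj hvU hvE
    refine ⟨⟨v, hvU⟩, hzu.trans (SimpleGraph.Adj.reachable ?_), rfl⟩
    show ((G.deleteEdges E').induce Uᶜ).Adj zu ⟨v, hvU⟩
    simp only [SimpleGraph.comap_adj, SimpleGraph.deleteEdges_adj]
    exact ⟨hadj, hvE⟩
  -- min degree bound : S is large
  have hSbig : (d : ℝ) - γ * d / 2 + 1 ≤ (S.ncard : ℝ) := by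
    obtain ⟨u, hu⟩ : S.Nonempty := ⟨_, hxS⟩
    have hsub : G.neighborSet u ⊆ (G.neighborSet u ∩ S) ∪ U ∪ {v | s(u, v) ∈ E'} := by
      intro v hv
      by_cases hvU : v ∈ U
      · exact Or.inl (Or.inr hvU)
      by_cases hvE : s(u, v) ∈ E'
      · exact Or.inr hvE
      · exact Or.inl (Or.inl ⟨hv, hclose u hu v hv hvU hvE⟩)
    have h1 : (G.neighborSet u).ncard ≤ (G.neighborSet u ∩ S).ncard + U.ncard
        + ({v | s(u, v) ∈ E'} ∩ G.neighborSet u).ncard := by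
      calc (G.neighborSet u).ncard
          ≤ (((G.neighborSet u ∩ S) ∪ U) ∪ ({v | s(u, v) ∈ E'} ∩ G.neighborSet u)).ncard := by
            apply Set.ncard_le_ncard _ (Set.toFinite _)
            intro v hv
            rcases hsub hv with (h | h) | h
            · exact Or.inl (Or.inl h)
            · exact Or.inl (Or.inr h)
            · exact Or.inr ⟨h, hv⟩
        _ ≤ ((G.neighborSet u ∩ S) ∪ U).ncard + ({v | s(u, v) ∈ E'} ∩ G.neighborSet u).ncard :=
            Set.ncard_union_le _ _
        _ ≤ (G.neighborSet u ∩ S).ncard + U.ncard + ({v | s(u, v) ∈ E'} ∩ G.neighborSet u).ncard := by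
            exact add_le_add_left (Set.ncard_union_le _ _) _
    have h2 : ({v | s(u, v) ∈ E'} ∩ G.neighborSet u).ncard ≤ {e ∈ E' | u ∈ e}.ncard := by
      apply Set.ncard_le_ncard_of_injOn (fun v => s(u, v))
      · rintro v ⟨hvE, _⟩
        exact ⟨hvE, Sym2.mem_mk_left u v⟩
      · intro a _ b _ hab
        exact (Sym2.congr_right).mp hab
    have h3 : (G.neighborSet u ∩ S).ncard + 1 ≤ S.ncard := by
      have : insert u (G.neighborSet u ∩ S) ⊆ S := by
        rintro v (rfl | ⟨_, hv⟩)
        · exact hu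
        · exact hv
      calc (G.neighborSet u ∩ S).ncard + 1 = (insert u (G.neighborSet u ∩ S)).ncard := by
            rw [Set.ncard_insert_of_notMem (by simp) (Set.toFinite _)]
        _ ≤ S.ncard := Set.ncard_le_ncard this (Set.toFinite _)
    have h2' := hE'deg u
    have hUr := hU
    have h1r : (d : ℝ) ≤ ((G.neighborSet u ∩ S).ncard : ℝ) + U.ncard
        + (({v | s(u, v) ∈ E'} ∩ G.neighborSet u).ncard : ℝ) := by
      rw [← hreg u]; exact_mod_cast h1
    have h2r : (({v | s(u, v) ∈ E'} ∩ G.neighborSet u).ncard : ℝ) ≤ γ * d / 4 :=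
      le_trans (by exact_mod_cast h2) h2'
    have h3r : ((G.neighborSet u ∩ S).ncard : ℝ) + 1 ≤ (S.ncard : ℝ) := by exact_mod_cast h3
    linarith
  -- cut bound
  have hScard1 : 1 ≤ S.ncard := (Set.ncard_pos (Set.toFinite S)).mpr ⟨_, hxS⟩
  have hcut := hexp S hScard1 hsize
  -- upper bound on cutCount
  have hcutub : (cutCount G S : ℝ) ≤ (U.ncard : ℝ) * d + (S.ncard : ℝ) * (γ * d / 4) := by
    set A : Finset (V × V) :=
      Finset.univ.filter (fun p : V × V => G.Adj p.1 p.2 ∧ p.1 ∈ S ∧ p.2 ∉ S) with hA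
    have hcc : cutCount G S = A.card := by
      rw [cutCount, ← Set.ncard_coe_finset A]
      congr 1
      ext p
      simp [hA]
    set A1 : Finset (V × V) := A.filter (fun p => p.2 ∈ U) with hA1def
    set A2 : Finset (V × V) := A.filter (fun p => s(p.1, p.2) ∈ E') with hA2def
    have hsplit : A ⊆ A1 ∪ A2 := by
      intro p hp
      simp only [hA, Finset.mem_filter, Finset.mem_univ, true_and] at hp
      obtain ⟨hadj, hp1, hp2⟩ := hp
      simp only [hA1def, hA2def, Finset.mem_union, Finset.mem_filter]
      by_cases hpU : p.2 ∈ U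
      · exact Or.inl ⟨by simp [hA, hadj, hp1, hp2], hpU⟩
      by_cases hpE : s(p.1, p.2) ∈ E'
      · exact Or.inr ⟨by simp [hA, hadj, hp1, hp2], hpE⟩
      · exact absurd (hclose p.1 hp1 p.2 hadj hpU hpE) hp2
    have hcardsplit : A.card ≤ A1.card + A2.card :=
      (Finset.card_le_card hsplit).trans (Finset.card_union_le _ _)
    -- A1 bound
    have hdegv : ∀ v : V, (G.neighborFinset v).card = d := by
      intro v
      rw [SimpleGraph.neighborFinset_def, Set.toFinset_card, ← Nat.card_eq_fintype_card,
        Nat.card_coe_set_eq, hreg]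
    have hA1card : A1.card ≤ U.ncard * d := by
      have hmem : ∀ p ∈ A1, p.2 ∈ U.toFinset := by
        intro p hp
        simp only [hA1def, Finset.mem_filter] at hp
        simpa using hp.2
      rw [Finset.card_eq_sum_card_fiberwise hmem]
      have hfib : ∀ v ∈ U.toFinset, (A1.filter (fun p => p.2 = v)).card ≤ d := by
        intro v _
        rw [← hdegv v]
        apply Finset.card_le_card_of_injOn Prod.fst
        · intro p hp
          simp only [Finset.mem_coe, hA1def, hA, Finset.mem_filter, Finset.mem_univ, true_and] at hp
          rw [Finset.mem_coe, SimpleGraph.mem_neighborFinset]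
          exact hp.2 ▸ hp.1.1.1.symm
        · intro p hp q hq hpq
          simp only [Finset.mem_coe, Finset.mem_filter] at hp hq
          exact Prod.ext hpq (hp.2.trans hq.2.symm)
      calc ∑ v ∈ U.toFinset, (A1.filter (fun p => p.2 = v)).card
          ≤ ∑ _v ∈ U.toFinset, d := Finset.sum_le_sum hfib
        _ = U.toFinset.card * d := by rw [Finset.sum_const, smul_eq_mul]
        _ = U.ncard * d := by rw [← Set.ncard_eq_toFinset_card']
    -- A2 bound
    have hA2card : (A2.card : ℝ) ≤ (S.ncard : ℝ) * (γ * d / 4) := by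
      have hmem : ∀ p ∈ A2, p.1 ∈ S.toFinset := by
        intro p hp
        simp only [hA2def, hA, Finset.mem_filter, Finset.mem_univ, true_and] at hp
        simpa using hp.1.2.1
      rw [Finset.card_eq_sum_card_fiberwise hmem]
      push_cast
      have hfib : ∀ u ∈ S.toFinset, ((A2.filter (fun p => p.1 = u)).card : ℝ) ≤ γ * d / 4 := by
        intro u _
        refine le_trans ?_ (hE'deg u)
        have hnat : (A2.filter (fun p => p.1 = u)).card ≤ {e ∈ E' | u ∈ e}.ncard := by
          rw [Set.ncard_eq_toFinset_card']
          apply Finset.card_le_card_of_injOn (fun p => s(p.1, p.2))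
          · intro p hp
            simp only [Finset.mem_coe, hA2def, hA, Finset.mem_filter, Finset.mem_univ, true_and] at hp
            simp only [Finset.mem_coe, Set.mem_toFinset, Set.mem_setOf_eq]
            exact ⟨hp.1.2, hp.2 ▸ Sym2.mem_mk_left _ _⟩
          · intro p hp q hq hpq
            simp only [Finset.mem_coe, Finset.mem_filter] at hp hq
            refine Prod.ext (hp.2.trans hq.2.symm) ?_
            simp only [hp.2, hq.2] at hpq
            exact Sym2.congr_right.mp hpq
        exact_mod_cast hnat
      calc ∑ u ∈ S.toFinset, ((A2.filter (fun p => p.1 = u)).card : ℝ)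
          ≤ ∑ _u ∈ S.toFinset, (γ * d / 4) := Finset.sum_le_sum hfib
        _ = S.toFinset.card * (γ * d / 4) := by rw [Finset.sum_const, nsmul_eq_mul]
        _ = (S.ncard : ℝ) * (γ * d / 4) := by rw [← Set.ncard_eq_toFinset_card']
    have hA1r : (A1.card : ℝ) ≤ (U.ncard : ℝ) * d := by exact_mod_cast hA1card
    have hAr : (A.card : ℝ) ≤ (A1.card : ℝ) + (A2.card : ℝ) := by exact_mod_cast hcardsplit
    rw [hcc]
    linarith
  have hd' : (1 : ℝ) ≤ (d : ℝ) := by exact_mod_cast hd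
  have ht : (0 : ℝ) < γ * d := mul_pos hγ (lt_of_lt_of_le one_pos hd')
  have hUd : (U.ncard : ℝ) * d ≤ γ * d / 4 * d := by
    apply mul_le_mul_of_nonneg_right hU; linarith
  have hA : γ * d * (S.ncard : ℝ) ≤ γ * d * ((d : ℝ) / 4 + (S.ncard : ℝ) / 4) := by
    ring_nf
    ring_nf at hcut hcutub hUd
    nlinarith [hcut, hcutub, hUd]
  have hs3 : (S.ncard : ℝ) ≤ (d : ℝ) / 4 + (S.ncard : ℝ) / 4 :=
    le_of_mul_le_mul_left hA ht
  have hgd : γ * d ≤ (d : ℝ) := by nlinarith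
  linarith


/-- An `n`-vertex `d`-regular `γ`-expander stays connected after
simultaneously removing any edge set `E'` of maximum degree at most `γd/4` and any
vertex set `U` of size at most `γd/4` (i.e. it is `(γd/4)`-iron). -/
theorem statement3 {V : Type*} [Fintype V] [Nonempty V] (G : SimpleGraph V) (d : ℕ) (γ : ℝ)
    (hd : 1 ≤ d) (hγ : 0 < γ)
    (hreg : ∀ v : V, (G.neighborSet v).ncard = d)
    (hexp : ∀ S : Set V, 1 ≤ S.ncard → (S.ncard : ℝ) ≤ 2 / 3 * (Fintype.card V : ℝ) →
      γ * d * S.ncard ≤ (cutCount G S : ℝ))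
    (E' : Set (Sym2 V)) (hE'sub : E' ⊆ G.edgeSet)
    (hE'deg : ∀ v : V, ({e ∈ E' | v ∈ e}.ncard : ℝ) ≤ γ * d / 4)
    (U : Set V) (hU : (U.ncard : ℝ) ≤ γ * d / 4) :
    ((G.deleteEdges E').induce Uᶜ).Connected := by
  classical
  obtain ⟨v0⟩ : Nonempty V := inferInstance
  have hdegv : ∀ v : V, (G.neighborFinset v).card = d := by
    intro v
    rw [SimpleGraph.neighborFinset_def, Set.toFinset_card, ← Nat.card_eq_fintype_card,
      Nat.card_coe_set_eq, hreg]
  have hn : d + 1 ≤ Fintype.card V := by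
    have h1 : (insert v0 (G.neighborFinset v0)).card = d + 1 := by
      rw [Finset.card_insert_of_notMem (by simp), hdegv]
    calc d + 1 = (insert v0 (G.neighborFinset v0)).card := h1.symm
      _ ≤ Fintype.card V := Finset.card_le_univ _
  have hdpos : (0 : ℝ) < (d : ℝ) := by exact_mod_cast hd
  have hγ1 : γ ≤ 1 := by
    have hcs : {p : V × V | G.Adj p.1 p.2 ∧ p.1 ∈ ({v0} : Set V) ∧ p.2 ∉ ({v0} : Set V)}
        = (fun w => (v0, w)) '' G.neighborSet v0 := by
      ext ⟨a, b⟩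
      simp only [Set.mem_setOf_eq, Set.mem_singleton_iff, Set.mem_image]
      constructor
      · rintro ⟨hadj, rfl, _⟩; exact ⟨b, hadj, rfl⟩
      · rintro ⟨w, hw, heq⟩
        obtain ⟨rfl, rfl⟩ := Prod.mk.injEq _ _ _ _ ▸ heq
        exact ⟨hw, rfl, (G.ne_of_adj hw).symm⟩
    have hcv : cutCount G {v0} = d := by
      rw [cutCount, hcs, Set.ncard_image_of_injective _
        (fun a b h => (Prod.ext_iff.mp h).2), hreg]
    have h2n : (2 : ℝ) ≤ (Fintype.card V : ℝ) := by exact_mod_cast le_trans (by omega) hn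
    have := hexp {v0} (by simp) (by rw [Set.ncard_singleton]; push_cast; linarith)
    rw [hcv, Set.ncard_singleton] at this
    push_cast at this
    nlinarith
  have hUne : Uᶜ.Nonempty := by
    rw [Set.nonempty_compl]
    intro h
    have : U.ncard = Fintype.card V := by
      rw [h, Set.ncard_univ, Nat.card_eq_fintype_card]
    rw [this] at hU
    have : ((d : ℝ) + 1) ≤ (Fintype.card V : ℝ) := by exact_mod_cast hn
    nlinarith
  rw [SimpleGraph.connected_iff]
  refine ⟨?_, hUne.to_subtype⟩
  intro x y
  by_contra hxy
  set H := (G.deleteEdges E').induce Uᶜ with hH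
  set Sx : Set V := Subtype.val '' {z : ↥Uᶜ | H.Reachable x z} with hSx
  set Sy : Set V := Subtype.val '' {z : ↥Uᶜ | H.Reachable y z} with hSy
  have hdisj : Disjoint Sx Sy := by
    rw [Set.disjoint_left]
    rintro v ⟨z, hz, rfl⟩ ⟨w, hw, hvw⟩
    have hzw : w = z := Subtype.ext hvw
    exact hxy (hz.trans (hzw ▸ hw).symm)
  have hsum : Sx.ncard + Sy.ncard ≤ Fintype.card V := by
    rw [← Set.ncard_union_eq hdisj (Set.toFinite _) (Set.toFinite _)]
    calc (Sx ∪ Sy).ncard ≤ (Set.univ : Set V).ncard :=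
          Set.ncard_le_ncard (Set.subset_univ _) (Set.toFinite _)
      _ = Fintype.card V := by rw [Set.ncard_univ, Nat.card_eq_fintype_card]
  have hsumr : (Sx.ncard : ℝ) + (Sy.ncard : ℝ) ≤ (Fintype.card V : ℝ) := by exact_mod_cast hsum
  by_cases hc : (Sx.ncard : ℝ) ≤ 2 / 3 * (Fintype.card V : ℝ)
  · exact key_lemma G d γ hd hγ hγ1 hreg hexp E' hE'deg U hU x hc
  · push_neg at hc
    refine key_lemma G d γ hd hγ hγ1 hreg hexp E' hE'deg U hU y ?_
    have hcard0 : (0 : ℝ) ≤ (Fintype.card V : ℝ) := Nat.cast_nonneg _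
    rw [← hSy]
    linarith
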